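/- Let (X,C,R,κ) be a mass action system whose graph of complexes D = (C,R) satisfies ℓ = t = 1, is not strongly connected, and has |C'| = 1. Then for all i, j ∈ C'': the denominator ∑_{R̃ ∈ T_D(C')} ∏_{a ∈ R̃} κ_a is positive, the matrix I''_κ is invertible, and ((I''_κ)^{−1})_{ji} = −(∑_{R̃ ∈ T^{ij}_D(C' ∪ {j})} ∏_{a ∈ R̃} κ_a) / (∑_{R̃ ∈ T_D(C')} ∏_{a ∈ R̃} κ_a). -/

import Mathlib

open Finset Relation

/-- The matrix `I_κ ∈ ℝ^{c×c}` with `(I_κ)_{ji} = κ_{ij}` for `j ≠ i` and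
`(I_κ)_{ii} = −∑_{k≠i} κ_{ik}`. -/
noncomputable def Ikappa {c : ℕ} (κ : Fin c → Fin c → ℝ) : Matrix (Fin c) (Fin c) ℝ :=
  Matrix.of fun j i => if j = i then -∑ k ∈ Finset.univ.erase i, κ i k else κ i j

/-- `κ` is (the extension by zero of) a family of positive rate coefficients on `R`. -/
def ValidK {c : ℕ} (R : Finset (Fin c × Fin c)) (κ : Fin c → Fin c → ℝ) : Prop :=
  (∀ p ∈ R, 0 < κ p.1 p.2) ∧ ∀ p : Fin c × Fin c, p ∉ R → κ p.1 p.2 = 0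

/-- The monomial map `Θ : ℝ^n_{>0} → ℝ^c`, `Θ(x)_i = ∏_s x_s^{B_{si}}`. -/
noncomputable def Theta {n c : ℕ} (B : Matrix (Fin n) (Fin c) ℕ) (x : Fin n → ℝ) :
    Fin c → ℝ :=
  fun i => ∏ s, x s ^ B s i

/-- The set of positive steady states `E^κ_+` is nonempty. -/
def EposNonempty {n c : ℕ} (B : Matrix (Fin n) (Fin c) ℕ) (κ : Fin c → Fin c → ℝ) : Prop :=
  ∃ x : Fin n → ℝ, (∀ s, 0 < x s) ∧
    (B.map (Nat.cast : ℕ → ℝ)).mulVec ((Ikappa κ).mulVec (Theta B x)) = 0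

/-- The deficiency `δ = dim(ker B ∩ ran I_κ)` equals one. -/
def DeficiencyOneAt {n c : ℕ} (B : Matrix (Fin n) (Fin c) ℕ)
    (κ : Fin c → Fin c → ℝ) : Prop :=
  Module.finrank ℝ
    ↥(LinearMap.ker (Matrix.mulVecLin (B.map (Nat.cast : ℕ → ℝ))) ⊓
      LinearMap.range (Matrix.mulVecLin (Ikappa κ))) = 1

/-- Reachability (existence of a directed walk) in the directed graph with arc set `R`. -/
def Reach {c : ℕ} (R : Finset (Fin c × Fin c)) (a b : Fin c) : Prop :=
  Relation.ReflTransGen (fun x y => (x, y) ∈ R) a b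

/-- `S` is a `U`-branching in the directed graph with arc set `A`: every vertex of `U` has
out-degree `0`, every other vertex has out-degree `1`, and there is no directed circuit. -/
def IsBranching {c : ℕ} (A : Finset (Fin c × Fin c)) (U : Finset (Fin c))
    (S : Finset (Fin c × Fin c)) : Prop :=
  S ⊆ A ∧ (∀ v ∈ U, ∀ a ∈ S, a.1 ≠ v) ∧
    (∀ v : Fin c, v ∉ U → (S.filter (fun a => a.1 = v)).card = 1) ∧
    ¬ ∃ v : Fin c, Relation.TransGen (fun x y => (x, y) ∈ S) v v

/-- `T_D(U)`: the set of `U`-branchings in the directed graph with arc set `A`. -/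
noncomputable def TDU {c : ℕ} (A : Finset (Fin c × Fin c)) (U : Finset (Fin c)) :
    Finset (Finset (Fin c × Fin c)) :=
  @Finset.filter _ (fun S => IsBranching A U S) (Classical.decPred _) A.powerset

/-- `T^{ij}_D(U)`: the set of `U`-branchings containing a directed path from `i` to `j`. -/
noncomputable def TDUij {c : ℕ} (A : Finset (Fin c × Fin c)) (U : Finset (Fin c))
    (i j : Fin c) : Finset (Finset (Fin c × Fin c)) :=
  @Finset.filter _ (fun S => Relation.ReflTransGen (fun x y => (x, y) ∈ S) i j)
    (Classical.decPred _) (TDU A U)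


section RelLemmas
variable {α : Type*} {ρ : α → α → Prop}

/-- relation with source `k` removed -/
def relx (ρ : α → α → Prop) (k : α) : α → α → Prop := fun x y => x ≠ k ∧ ρ x y

lemma rtg_relx_le {k : α} {a b : α} (h : ReflTransGen (relx ρ k) a b) :
    ReflTransGen ρ a b := ReflTransGen.mono (fun _ _ h => h.2) _ _ h

lemma tg_relx_le {k : α} {a b : α} (h : TransGen (relx ρ k) a b) :
    TransGen ρ a b := TransGen.mono (fun _ _ h => h.2) _ _ h

/-- D2': first-visit path: a path to `k` can be chosen avoiding `k` as a source. -/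
lemma rtg_relx_of_rtg {k a : α} (h : ReflTransGen ρ a k) :
    ReflTransGen (relx ρ k) a k := by
  induction h using ReflTransGen.head_induction_on with
  | refl => exact ReflTransGen.refl
  | @head x y h' _ ih =>
    by_cases hx : x = k
    · exact hx ▸ ReflTransGen.refl
    · exact ReflTransGen.head ⟨hx, h'⟩ ih

/-- D9 aux -/
lemma rtg_relx_of_not_reach {k a b : α} (h : ReflTransGen ρ a b)
    (hk : ∀ x, ReflTransGen ρ a x → x ≠ k) : ReflTransGen (relx ρ k) a b := by
  induction h using ReflTransGen.head_induction_on with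
  | refl => exact ReflTransGen.refl
  | @head x y h' hyb ih =>
    exact ReflTransGen.head ⟨hk x ReflTransGen.refl, h'⟩
      (ih (fun z hz => hk z (ReflTransGen.head h' hz)))

/-- D9 -/
lemma tg_relx_of_not_reach {k v : α} (h : TransGen ρ v v)
    (hk : ¬ ReflTransGen ρ v k) : TransGen (relx ρ k) v v := by
  obtain ⟨z, hvz, hzv⟩ := (TransGen.head'_iff).1 h
  have hne : ∀ x, ReflTransGen ρ v x → x ≠ k := by
    rintro x hx rfl; exact hk hx
  exact TransGen.head' ⟨hne v ReflTransGen.refl, hvz⟩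
    (rtg_relx_of_not_reach hzv (fun z' hz' => hne z' (ReflTransGen.head hvz hz')))

variable (hdet : ∀ {x y z : α}, ρ x y → ρ x z → y = z)
include hdet

/-- D2 -/
lemma cycle_back {a b : α} (h : ReflTransGen ρ a b) :
    TransGen ρ a a → ReflTransGen ρ b a := by
  induction h using ReflTransGen.head_induction_on with
  | refl => exact fun _ => ReflTransGen.refl
  | @head x y h' hyb ih =>
    intro hcx
    obtain ⟨z, hxz, hzx⟩ := TransGen.head'_iff.1 hcx
    have hz : z = y := hdet hxz h'
    subst hz
    exact (ih (TransGen.tail' hzx h')).trans hzx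

/-- D7: a cycle in `relx ρ k` shifts along the orbit. -/
lemma cycle_shift {k v x : α} (hc : TransGen (relx ρ k) v v)
    (h : ReflTransGen ρ v x) : TransGen (relx ρ k) x x := by
  induction h with
  | refl => exact hc
  | @tail b d h' step ih =>
    obtain ⟨e, hbe, hec⟩ := TransGen.head'_iff.1 ih
    have : e = d := hdet hbe.2 step
    subst this
    exact TransGen.tail' hec ⟨hbe.1, step⟩

/-- D6 -/
lemma cycle_not_reach {k v : α} (hc : TransGen (relx ρ k) v v) :
    ¬ ReflTransGen ρ v k := by
  intro h
  obtain ⟨z, hkz, _⟩ := TransGen.head'_iff.1 (cycle_shift (ρ := ρ) hdet hc h)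
  exact hkz.1 rfl

/-- fixed point orbit -/
lemma fix_orbit {v x : α} (hv : ρ v v) (h : ReflTransGen ρ v x) : x = v := by
  induction h with
  | refl => rfl
  | tail h' step ih =>
    subst ih
    exact hdet step hv

omit hdet

lemma tg_decrease (d : α → ℕ) (hdec : ∀ x y, ρ x y → d y < d x) {a b : α}
    (h : TransGen ρ a b) : d b < d a := by
  induction h with
  | single h' => exact hdec _ _ h'
  | tail h' step ih => exact lt_trans (hdec _ _ step) ih

end RelLemmas

open Relation

section Ctx
variable {c : ℕ} {r : Fin c}

/-- out-map relation of `g` -/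
def grel (r : Fin c) (g : {x : Fin c // x ≠ r} → Fin c) : Fin c → Fin c → Prop :=
  fun x y => ∃ h : x ≠ r, g ⟨x, h⟩ = y

lemma grel_det {g : {x : Fin c // x ≠ r} → Fin c} :
    ∀ {x y z : Fin c}, grel r g x y → grel r g x z → y = z := by
  rintro x y z ⟨h1, rfl⟩ ⟨h2, rfl⟩; rfl

def toS (g : {x : Fin c // x ≠ r} → Fin c) : Finset (Fin c × Fin c) :=
  (Finset.univ : Finset {x : Fin c // x ≠ r}).image fun v : {x : Fin c // x ≠ r} => ((v : Fin c), g v)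

def toS' (k : {x : Fin c // x ≠ r}) (g : {x : Fin c // x ≠ r} → Fin c) :
    Finset (Fin c × Fin c) :=
  ((Finset.univ : Finset {x : Fin c // x ≠ r}).erase k).image fun v : {x : Fin c // x ≠ r} => ((v : Fin c), g v)

lemma mem_toS {g : {x : Fin c // x ≠ r} → Fin c} {p : Fin c × Fin c} :
    p ∈ toS g ↔ grel r g p.1 p.2 := by
  constructor
  · intro hp
    obtain ⟨v, -, rfl⟩ := Finset.mem_image.1 hp
    exact ⟨v.2, rfl⟩
  · rintro ⟨h, hg⟩
    exact Finset.mem_image.2 ⟨(⟨p.1, h⟩ : {x : Fin c // x ≠ r}), Finset.mem_univ _, by simp [hg]⟩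

lemma mem_toS' {k : {x : Fin c // x ≠ r}} {g : {x : Fin c // x ≠ r} → Fin c}
    {p : Fin c × Fin c} :
    p ∈ toS' k g ↔ relx (grel r g) ↑k p.1 p.2 := by
  constructor
  · intro hp
    obtain ⟨v, hv, rfl⟩ := Finset.mem_image.1 hp
    exact ⟨fun h => (Finset.mem_erase.1 hv).1 (Subtype.ext h), v.2, rfl⟩
  · rintro ⟨hne, h, hg⟩
    exact Finset.mem_image.2 ⟨(⟨p.1, h⟩ : {x : Fin c // x ≠ r}), Finset.mem_erase.2
      ⟨fun hh => hne (congrArg Subtype.val hh), Finset.mem_univ _⟩, by simp [hg]⟩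

def Acyc (r : Fin c) (g : {x : Fin c // x ≠ r} → Fin c) : Prop :=
  ¬ ∃ v, TransGen (grel r g) v v

def AllCyc (r : Fin c) (g : {x : Fin c // x ≠ r} → Fin c) (k : Fin c) : Prop :=
  ∀ v, TransGen (grel r g) v v → ReflTransGen (grel r g) v k

def Pp (r : Fin c) (g : {x : Fin c // x ≠ r} → Fin c) (i k : {x : Fin c // x ≠ r}) : Prop :=
  AllCyc r g ↑k ∧ ReflTransGen (relx (grel r g) ↑k) ↑i ↑k

/-- D8 -/
lemma allCyc_iff {g : {x : Fin c // x ≠ r} → Fin c} {k : Fin c} :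
    AllCyc r g k ↔ ¬ ∃ v, TransGen (relx (grel r g) k) v v := by
  constructor
  · rintro h ⟨v, hv⟩
    exact cycle_not_reach (ρ := grel r g) grel_det hv (h v (tg_relx_le hv))
  · intro h v hv
    by_contra hr
    exact h ⟨v, tg_relx_of_not_reach hv hr⟩

/-- full arc set: all non-loops -/
def Rfull (c : ℕ) : Finset (Fin c × Fin c) :=
  Finset.univ.filter (fun p => p.1 ≠ p.2)

noncomputable def cfilter {β : Type*} (p : β → Prop) (s : Finset β) : Finset β :=
  @Finset.filter _ p (Classical.decPred _) s

lemma mem_cfilter {β : Type*} {p : β → Prop} {s : Finset β} {a : β} :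
    a ∈ cfilter p s ↔ a ∈ s ∧ p a := @Finset.mem_filter _ _ (Classical.decPred _) _ _

lemma mem_TDU {A : Finset (Fin c × Fin c)} {U : Finset (Fin c)}
    {S : Finset (Fin c × Fin c)} : S ∈ TDU A U ↔ IsBranching A U S := by
  constructor
  · intro h
    exact ((@Finset.mem_filter _ _ (Classical.decPred _) _ _).1 h).2
  · intro h
    exact (@Finset.mem_filter _ _ (Classical.decPred _) _ _).2 ⟨Finset.mem_powerset.2 h.1, h⟩

lemma mem_TDUij {A : Finset (Fin c × Fin c)} {U : Finset (Fin c)}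
    {i j : Fin c} {S : Finset (Fin c × Fin c)} :
    S ∈ TDUij A U i j ↔ IsBranching A U S ∧
      ReflTransGen (fun x y => (x, y) ∈ S) i j := by
  constructor
  · intro h
    have h1 := (@Finset.mem_filter _ _ (Classical.decPred _) _ _).1 h
    exact ⟨mem_TDU.1 h1.1, h1.2⟩
  · intro h
    exact (@Finset.mem_filter _ _ (Classical.decPred _) _ _).2 ⟨mem_TDU.2 h.1, h.2⟩

lemma toS_inj : Function.Injective (toS (c := c) (r := r)) := by
  intro g g' h
  funext v
  have hv : ((v : Fin c), g v) ∈ toS g' := by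
    rw [← h]
    exact mem_toS.2 ⟨v.2, rfl⟩
  obtain ⟨h1, h2⟩ := mem_toS.1 hv
  have h3 : (⟨(↑v, g v).1, h1⟩ : {x : Fin c // x ≠ r}) = v := Subtype.ext rfl
  rw [h3] at h2
  exact h2.symm

lemma TDU_full_eq :
    TDU (Rfull c) {r} =
      (cfilter (fun g : {x : Fin c // x ≠ r} → Fin c =>
        Acyc r g ∧ ∀ v, g v ≠ ↑v) Finset.univ).image toS := by
  ext S
  rw [mem_TDU, Finset.mem_image]
  constructor
  · intro hbr
    obtain ⟨hsub, hU, hcard, hcirc⟩ := hbr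
    have hr : ∀ a ∈ S, a.1 ≠ r := fun a ha => hU r (Finset.mem_singleton_self r) a ha
    have H : ∀ v : {x : Fin c // x ≠ r}, ∃ y, ((v : Fin c), y) ∈ S ∧
        ∀ z, ((v : Fin c), z) ∈ S → z = y := by
      intro v
      obtain ⟨e, he⟩ := Finset.card_eq_one.1 (hcard ↑v (by simp [v.2]))
      have hee : e ∈ S.filter (fun a => a.1 = (v : Fin c)) := he ▸ Finset.mem_singleton_self e
      rw [Finset.mem_filter] at hee
      refine ⟨e.2, ?_, ?_⟩
      · rw [← hee.2]
        exact hee.1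
      · intro z hz
        have : ((v : Fin c), z) ∈ S.filter (fun a => a.1 = (v : Fin c)) :=
          Finset.mem_filter.2 ⟨hz, rfl⟩
        rw [he, Finset.mem_singleton] at this
        rw [← hee.2] at this
        exact congrArg Prod.snd this
    choose g hg huniq using H
    have hSg : toS g = S := by
      ext p
      rw [mem_toS]
      constructor
      · rintro ⟨h1, h2⟩
        have := hg ⟨p.1, h1⟩
        rw [h2] at this
        exact this
      · intro hp
        have h1 : p.1 ≠ r := hr p hp
        have := huniq ⟨p.1, h1⟩ p.2 hp
        exact ⟨h1, this.symm⟩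
    refine ⟨g, mem_cfilter.2 ⟨Finset.mem_univ _, ?_, ?_⟩, hSg⟩
    · rintro ⟨v, hv⟩
      refine hcirc ⟨v, TransGen.mono (fun x y h => ?_) _ _ hv⟩
      obtain ⟨h1, h2⟩ := h
      rw [← hSg]
      exact mem_toS.2 ⟨h1, h2⟩
    · intro v
      have := hsub (hg v)
      unfold Rfull at this
      rw [Finset.mem_filter] at this
      exact fun h => this.2 h.symm
  · rintro ⟨g, hgmem, rfl⟩
    rw [mem_cfilter] at hgmem
    obtain ⟨-, hA, hNF⟩ := hgmem
    have hsub : toS g ⊆ Rfull c := by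
      intro p hp
      obtain ⟨h1, h2⟩ := mem_toS.1 hp
      unfold Rfull
      rw [Finset.mem_filter]
      exact ⟨Finset.mem_univ _, fun he => hNF ⟨p.1, h1⟩ (h2.trans he.symm)⟩
    refine ⟨hsub, ?_, ?_, ?_⟩
    · intro v hv a ha
      rw [Finset.mem_singleton] at hv
      obtain ⟨h1, -⟩ := mem_toS.1 ha
      rw [hv]
      exact h1
    · intro v hv
      rw [Finset.mem_singleton] at hv
      have : (toS g).filter (fun a => a.1 = v) = {(v, g ⟨v, hv⟩)} := by
        ext a
        rw [Finset.mem_filter, Finset.mem_singleton, mem_toS]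
        constructor
        · rintro ⟨⟨h1, h2⟩, h3⟩
          subst h3
          exact Prod.ext rfl h2.symm
        · rintro rfl
          exact ⟨⟨hv, rfl⟩, rfl⟩
      rw [this, Finset.card_singleton]
    · rintro ⟨v, hv⟩
      exact hA ⟨v, TransGen.mono (fun x y h => mem_toS.1 h) _ _ hv⟩

lemma TDUij_full_eq (i k : {x : Fin c // x ≠ r}) :
    (TDUij (Rfull c) (insert (↑k) {r}) ↑i ↑k) ×ˢ (Finset.univ : Finset (Fin c)) =
      (cfilter (fun g : {x : Fin c // x ≠ r} → Fin c =>
        Pp r g i k ∧ ∀ v, v ≠ k → g v ≠ ↑v) Finset.univ).image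
      (fun g => (toS' k g, g k)) := by
  ext p
  rw [Finset.mem_product, Finset.mem_image]
  constructor
  · rintro ⟨hS, -⟩
    obtain ⟨⟨hsub, hU, hcard, hcirc⟩, hpath⟩ := mem_TDUij.1 hS
    have hrk : ∀ a ∈ p.1, a.1 ≠ r ∧ a.1 ≠ (k : Fin c) := fun a ha =>
      ⟨hU r (Finset.mem_insert_of_mem (Finset.mem_singleton_self r)) a ha,
       hU ↑k (Finset.mem_insert_self _ _) a ha⟩
    have H : ∀ v : {x : Fin c // x ≠ r}, v ≠ k → ∃ y, ((v : Fin c), y) ∈ p.1 ∧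
        ∀ z, ((v : Fin c), z) ∈ p.1 → z = y := by
      intro v hv
      have hvk : (v : Fin c) ∉ insert (↑k) ({r} : Finset (Fin c)) := by
        simp only [Finset.mem_insert, Finset.mem_singleton]
        push_neg
        exact ⟨fun h => hv (Subtype.ext h), v.2⟩
      obtain ⟨e, he⟩ := Finset.card_eq_one.1 (hcard ↑v hvk)
      have hee : e ∈ p.1.filter (fun a => a.1 = (v : Fin c)) := he ▸ Finset.mem_singleton_self e
      rw [Finset.mem_filter] at hee
      refine ⟨e.2, ?_, ?_⟩
      · rw [← hee.2]; exact hee.1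
      · intro z hz
        have : ((v : Fin c), z) ∈ p.1.filter (fun a => a.1 = (v : Fin c)) :=
          Finset.mem_filter.2 ⟨hz, rfl⟩
        rw [he, Finset.mem_singleton] at this
        rw [← hee.2] at this
        exact congrArg Prod.snd this
    choose g0 hg0 huniq using H
    set g : {x : Fin c // x ≠ r} → Fin c :=
      fun v => if h : v = k then p.2 else g0 v h with hgdef
    have hgk : g k = p.2 := by rw [hgdef]; simp
    have hgv : ∀ (v) (h : v ≠ k), g v = g0 v h := by
      intro v h
      rw [hgdef]
      simp [h]
    have hSg : toS' k g = p.1 := by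
      ext q
      rw [mem_toS']
      constructor
      · rintro ⟨hqk, hqr, hq⟩
        have hvk : (⟨q.1, hqr⟩ : {x : Fin c // x ≠ r}) ≠ k := fun h => hqk (congrArg Subtype.val h)
        rw [hgv _ hvk] at hq
        have := hg0 ⟨q.1, hqr⟩ hvk
        rw [hq] at this
        exact this
      · intro hq
        obtain ⟨hqr, hqk⟩ := hrk q hq
        have hvk : (⟨q.1, hqr⟩ : {x : Fin c // x ≠ r}) ≠ k := fun h => hqk (congrArg Subtype.val h)
        refine ⟨hqk, hqr, ?_⟩
        rw [hgv _ hvk]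
        exact (huniq ⟨q.1, hqr⟩ hvk q.2 hq).symm
    have hrelx : ∀ x y, relx (grel r g) (↑k) x y ↔ (x, y) ∈ p.1 := by
      intro x y
      rw [← hSg]
      exact (mem_toS' (p := (x, y))).symm
    refine ⟨g, mem_cfilter.2 ⟨Finset.mem_univ _, ⟨?_, ?_⟩, ?_⟩, ?_⟩
    · rw [allCyc_iff]
      rintro ⟨v, hv⟩
      exact hcirc ⟨v, TransGen.mono (fun x y h => (hrelx x y).1 h) _ _ hv⟩
    · exact ReflTransGen.mono (fun x y h => (hrelx x y).2 h) _ _ hpath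
    · intro v hv hfix
      have := hsub ((hrelx ↑v (g v)).1 ⟨fun h => hv (Subtype.ext h), v.2, rfl⟩)
      unfold Rfull at this
      rw [Finset.mem_filter] at this
      exact this.2 hfix.symm
    · exact Prod.ext hSg hgk
  · rintro ⟨g, hgmem, rfl⟩
    rw [mem_cfilter] at hgmem
    obtain ⟨-, ⟨hAC, hpath⟩, hNF⟩ := hgmem
    refine ⟨mem_TDUij.2 ⟨⟨?_, ?_, ?_, ?_⟩, ?_⟩, Finset.mem_univ _⟩
    · intro q hq
      obtain ⟨hqk, hqr, hq2⟩ := mem_toS'.1 hq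
      unfold Rfull
      rw [Finset.mem_filter]
      refine ⟨Finset.mem_univ _, fun he => ?_⟩
      exact hNF ⟨q.1, hqr⟩ (fun h => hqk (congrArg Subtype.val h)) (hq2.trans he.symm)
    · intro v hv a ha
      obtain ⟨hak, har, -⟩ := mem_toS'.1 ha
      rcases Finset.mem_insert.1 hv with h | h
      · rw [h]; exact hak
      · rw [Finset.mem_singleton.1 h]; exact har
    · intro v hv
      rw [Finset.mem_insert, Finset.mem_singleton] at hv
      push_neg at hv
      obtain ⟨hvk, hvr⟩ := hv
      have : (toS' k g).filter (fun a => a.1 = v) = {(v, g ⟨v, hvr⟩)} := by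
        ext a
        rw [Finset.mem_filter, Finset.mem_singleton, mem_toS']
        constructor
        · rintro ⟨⟨h0, h1, h2⟩, h3⟩
          subst h3
          exact Prod.ext rfl h2.symm
        · rintro rfl
          exact ⟨⟨hvk, hvr, rfl⟩, rfl⟩
      rw [this, Finset.card_singleton]
    · rintro ⟨v, hv⟩
      rw [allCyc_iff] at hAC
      exact hAC ⟨v, TransGen.mono (fun x y h => mem_toS'.1 h) _ _ hv⟩
    · exact ReflTransGen.mono (fun x y h => mem_toS'.2 h) _ _ hpath

section Sums
variable (κ : Fin c → Fin c → ℝ)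

lemma sum_TDU_full {R : Finset (Fin c × Fin c)} (hsub : R ⊆ Rfull c)
    (hz : ∀ p ∉ R, κ p.1 p.2 = 0) (U : Finset (Fin c)) :
    ∑ S ∈ TDU (Rfull c) U, ∏ a ∈ S, κ a.1 a.2 = ∑ S ∈ TDU R U, ∏ a ∈ S, κ a.1 a.2 := by
  refine (Finset.sum_subset ?_ ?_).symm
  · intro S hS
    have h := mem_TDU.1 hS
    exact mem_TDU.2 ⟨fun a ha => hsub (h.1 ha), h.2.1, h.2.2⟩
  · intro S hS hS'
    by_cases hSR : S ⊆ R
    · exact absurd (mem_TDU.2 ⟨hSR, (mem_TDU.1 hS).2.1, (mem_TDU.1 hS).2.2⟩) hS'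
    · obtain ⟨a, ha, haR⟩ := Finset.not_subset.1 hSR
      exact Finset.prod_eq_zero ha (hz a haR)

lemma sum_TDUij_full {R : Finset (Fin c × Fin c)} (hsub : R ⊆ Rfull c)
    (hz : ∀ p ∉ R, κ p.1 p.2 = 0) (U : Finset (Fin c)) (i j : Fin c) :
    ∑ S ∈ TDUij (Rfull c) U i j, ∏ a ∈ S, κ a.1 a.2 =
      ∑ S ∈ TDUij R U i j, ∏ a ∈ S, κ a.1 a.2 := by
  refine (Finset.sum_subset ?_ ?_).symm
  · intro S hS
    have h := mem_TDUij.1 hS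
    exact mem_TDUij.2 ⟨⟨fun a ha => hsub (h.1.1 ha), h.1.2.1, h.1.2.2⟩, h.2⟩
  · intro S hS hS'
    by_cases hSR : S ⊆ R
    · have h := mem_TDUij.1 hS
      exact absurd (mem_TDUij.2 ⟨⟨hSR, h.1.2.1, h.1.2.2⟩, h.2⟩) hS'
    · obtain ⟨a, ha, haR⟩ := Finset.not_subset.1 hSR
      exact Finset.prod_eq_zero ha (hz a haR)

lemma prod_toS (g : {x : Fin c // x ≠ r} → Fin c) :
    ∏ a ∈ toS g, κ a.1 a.2 = ∏ v : {x : Fin c // x ≠ r}, κ ↑v (g v) := by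
  unfold toS
  rw [Finset.prod_image]
  intro x _ y _ h
  exact Subtype.ext (congrArg Prod.fst h)

lemma prod_toS' (k : {x : Fin c // x ≠ r}) (g : {x : Fin c // x ≠ r} → Fin c) :
    ∏ a ∈ toS' k g, κ a.1 a.2 = ∏ v ∈ Finset.univ.erase k, κ ↑v (g v) := by
  unfold toS'
  rw [Finset.prod_image]
  intro x _ y _ h
  exact Subtype.ext (congrArg Prod.fst h)

lemma wg_split (k : {x : Fin c // x ≠ r}) (g : {x : Fin c // x ≠ r} → Fin c) :
    ∏ v : {x : Fin c // x ≠ r}, κ ↑v (g v) =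
      κ ↑k (g k) * ∏ a ∈ toS' k g, κ a.1 a.2 := by
  rw [prod_toS']
  exact (Finset.mul_prod_erase _ _ (Finset.mem_univ k)).symm

/-- fixpoints are excluded by `Pp`. -/
lemma Pp_noFix {g : {x : Fin c // x ≠ r} → Fin c} {i k : {x : Fin c // x ≠ r}}
    (h : Pp r g i k) : ∀ v, v ≠ k → g v ≠ ↑v := by
  intro v hv hfix
  have hcyc : TransGen (grel r g) ↑v ↑v := TransGen.single ⟨v.2, hfix⟩
  have := h.1 ↑v hcyc
  have hkv := fix_orbit (ρ := grel r g) grel_det ⟨v.2, hfix⟩ this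
  exact hv (Subtype.ext hkv).symm

open Classical in
lemma L_T {R : Finset (Fin c × Fin c)} (hsub : R ⊆ Rfull c)
    (hz : ∀ p ∉ R, κ p.1 p.2 = 0) :
    ∑ S ∈ TDU R {r}, ∏ a ∈ S, κ a.1 a.2 =
      ∑ g : {x : Fin c // x ≠ r} → Fin c,
        if Acyc r g then ∏ v : {x : Fin c // x ≠ r}, κ ↑v (g v) else 0 := by
  rw [← sum_TDU_full κ hsub hz, TDU_full_eq]
  rw [Finset.sum_image (fun x _ y _ h => toS_inj h)]
  have h1 : ∀ g ∈ cfilter (fun g : {x : Fin c // x ≠ r} → Fin c =>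
      Acyc r g ∧ ∀ v, g v ≠ ↑v) Finset.univ,
      ∏ a ∈ toS g, κ a.1 a.2 = ∏ v : {x : Fin c // x ≠ r}, κ ↑v (g v) :=
    fun g _ => prod_toS κ g
  rw [Finset.sum_congr rfl h1]
  unfold cfilter
  rw [Finset.sum_filter]
  refine Finset.sum_congr rfl (fun g _ => ?_)
  by_cases hA : Acyc r g
  · have hNF : ∀ v, g v ≠ ↑v := by
      intro v hfix
      exact hA ⟨↑v, TransGen.single ⟨v.2, hfix⟩⟩
    rw [if_pos ⟨hA, hNF⟩, if_pos hA]
  · rw [if_neg (fun h => hA h.1), if_neg hA]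

open Classical in
lemma L5 {R : Finset (Fin c × Fin c)} (hsub : R ⊆ Rfull c)
    (hz : ∀ p ∉ R, κ p.1 p.2 = 0) (i k : {x : Fin c // x ≠ r}) (f : Fin c → ℝ) :
    ∑ g : {x : Fin c // x ≠ r} → Fin c,
        (if Pp r g i k then (∏ v : {x : Fin c // x ≠ r}, κ ↑v (g v)) * f (g k) else 0) =
      (∑ S ∈ TDUij R (insert (↑k) {r}) ↑i ↑k, ∏ a ∈ S, κ a.1 a.2) *
        (∑ m, κ ↑k m * f m) := by
  rw [← sum_TDUij_full κ hsub hz]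
  have hstep1 : ∑ g : {x : Fin c // x ≠ r} → Fin c,
      (if Pp r g i k then (∏ v : {x : Fin c // x ≠ r}, κ ↑v (g v)) * f (g k) else 0) =
      ∑ g ∈ cfilter (fun g : {x : Fin c // x ≠ r} → Fin c =>
        Pp r g i k ∧ ∀ v, v ≠ k → g v ≠ ↑v) Finset.univ,
        (∏ v : {x : Fin c // x ≠ r}, κ ↑v (g v)) * f (g k) := by
    unfold cfilter
    rw [Finset.sum_filter]
    refine Finset.sum_congr rfl (fun g _ => ?_)
    by_cases hP : Pp r g i k
    · rw [if_pos hP, if_pos ⟨hP, Pp_noFix hP⟩]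
    · rw [if_neg hP, if_neg (fun h => hP h.1)]
  rw [hstep1]
  have hinj : ∀ g ∈ cfilter (fun g : {x : Fin c // x ≠ r} → Fin c =>
      Pp r g i k ∧ ∀ v, v ≠ k → g v ≠ ↑v) Finset.univ,
      ∀ g' ∈ cfilter (fun g : {x : Fin c // x ≠ r} → Fin c =>
      Pp r g i k ∧ ∀ v, v ≠ k → g v ≠ ↑v) Finset.univ,
      (fun g => (toS' k g, g k)) g = (fun g => (toS' k g, g k)) g' → g = g' := by
    intro g _ g' _ h
    have h1 : toS' k g = toS' k g' := congrArg Prod.fst h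
    have h2 : g k = g' k := congrArg Prod.snd h
    funext v
    by_cases hv : v = k
    · rw [hv]; exact h2
    · have hmv : ((v : Fin c), g v) ∈ toS' k g' := by
        rw [← h1]
        exact mem_toS'.2 ⟨fun hh => hv (Subtype.ext hh), v.2, rfl⟩
      obtain ⟨-, hb, hc⟩ := mem_toS'.1 hmv
      have h3 : (⟨((v : Fin c), g v).1, hb⟩ : {x : Fin c // x ≠ r}) = v := Subtype.ext rfl
      rw [h3] at hc
      exact hc.symm
  have himg := TDUij_full_eq (r := r) i k
  calc ∑ g ∈ cfilter (fun g : {x : Fin c // x ≠ r} → Fin c =>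
        Pp r g i k ∧ ∀ v, v ≠ k → g v ≠ ↑v) Finset.univ,
        (∏ v : {x : Fin c // x ≠ r}, κ ↑v (g v)) * f (g k)
      = ∑ g ∈ cfilter (fun g : {x : Fin c // x ≠ r} → Fin c =>
        Pp r g i k ∧ ∀ v, v ≠ k → g v ≠ ↑v) Finset.univ,
        (fun p : Finset (Fin c × Fin c) × Fin c =>
          (∏ a ∈ p.1, κ a.1 a.2) * (κ ↑k p.2 * f p.2)) ((fun g => (toS' k g, g k)) g) := by
        refine Finset.sum_congr rfl (fun g _ => ?_)
        simp only []
        rw [wg_split κ k g]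
        ring
    _ = ∑ p ∈ (TDUij (Rfull c) (insert (↑k) {r}) ↑i ↑k) ×ˢ (Finset.univ : Finset (Fin c)),
          (∏ a ∈ p.1, κ a.1 a.2) * (κ ↑k p.2 * f p.2) := by
        rw [himg, Finset.sum_image hinj]
    _ = (∑ S ∈ TDUij (Rfull c) (insert (↑k) {r}) ↑i ↑k, ∏ a ∈ S, κ a.1 a.2) *
        (∑ m, κ ↑k m * f m) := by
        rw [Finset.sum_product, Finset.sum_mul_sum]

end Sums
open Classical in
/-- The key combinatorial identity. -/
lemma key_claim (g : {x : Fin c // x ≠ r} → Fin c) (i j : {x : Fin c // x ≠ r}) :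
    ((if Pp r g i j then (1:ℝ) else 0) -
      ∑ k ∈ cfilter (fun k : {x : Fin c // x ≠ r} => g k = ↑j) Finset.univ,
        (if Pp r g i k then (1:ℝ) else 0))
    = if Acyc r g ∧ i = j then 1 else 0 := by
  have det : ∀ {x y z : Fin c}, grel r g x y → grel r g x z → y = z := grel_det
  have hRU : Relator.RightUnique (grel r g) := fun _ _ _ h1 h2 => det h1 h2
  by_cases hA : Acyc r g
  · by_cases hij : i = j
    · subst hij
      have e1 : (if Acyc r g ∧ i = i then (1:ℝ) else 0) = 1 :=
        if_pos ⟨hA, rfl⟩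
      have e2 : (if Pp r g i i then (1:ℝ) else 0) = 1 :=
        if_pos ⟨fun v hv => absurd (⟨v, hv⟩ : ∃ v, TransGen (grel r g) v v) hA,
          ReflTransGen.refl⟩
      have hz : ∑ k ∈ cfilter (fun k : {x : Fin c // x ≠ r} => g k = ↑i) Finset.univ,
          (if Pp r g i k then (1:ℝ) else 0) = 0 := by
        refine Finset.sum_eq_zero (fun k hk => ?_)
        have hgk : g k = ↑i := (mem_cfilter.1 hk).2
        refine if_neg ?_
        rintro ⟨-, hp⟩
        exact hA ⟨↑i, TransGen.tail' (rtg_relx_le hp) ⟨k.2, hgk⟩⟩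
      rw [e1, e2, hz]
      ring
    · have e1 : (if Acyc r g ∧ i = j then (1:ℝ) else 0) = 0 :=
        if_neg (fun h => hij h.2)
      rw [e1]
      by_cases hre : ReflTransGen (grel r g) ↑i ↑j
      · have e2 : (if Pp r g i j then (1:ℝ) else 0) = 1 :=
          if_pos ⟨fun v hv => absurd (⟨v, hv⟩ : ∃ v, TransGen (grel r g) v v) hA,
            rtg_relx_of_rtg hre⟩
        have hij' : (i : Fin c) ≠ ↑j := fun h => hij (Subtype.ext h)
        rcases hre.cases_tail with he | ⟨x, hix, hxj⟩
        · exact absurd he.symm hij'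
        obtain ⟨hxr, hgx⟩ := hxj
        set k0 : {x : Fin c // x ≠ r} := ⟨x, hxr⟩ with hk0
        have hsum : ∑ k ∈ cfilter (fun k : {x : Fin c // x ≠ r} => g k = ↑j) Finset.univ,
            (if Pp r g i k then (1:ℝ) else 0) = 1 := by
          rw [Finset.sum_eq_single_of_mem k0 (mem_cfilter.2 ⟨Finset.mem_univ _, hgx⟩)]
          · exact if_pos ⟨fun v hv => absurd (⟨v, hv⟩ : ∃ v, TransGen (grel r g) v v) hA,
              rtg_relx_of_rtg hix⟩
          · intro b hb hbk
            have hgb : g b = ↑j := (mem_cfilter.1 hb).2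
            refine if_neg ?_
            rintro ⟨-, hp⟩
            have hrb : ReflTransGen (grel r g) ↑i ↑b := rtg_relx_le hp
            have hbk' : (b : Fin c) ≠ ↑k0 := fun h => hbk (Subtype.ext h)
            rcases ReflTransGen.total_of_right_unique hRU hrb hix with hbc | hcb
            · rcases hbc.cases_head with he | ⟨y, hby, hyk⟩
              · exact hbk' he
              · have : y = ↑j := det hby ⟨b.2, hgb⟩
                subst this
                exact hA ⟨↑j, TransGen.tail' hyk ⟨k0.2, hgx⟩⟩
            · rcases hcb.cases_head with he | ⟨y, hky, hyb⟩
              · exact hbk' he.symm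
              · have : y = ↑j := det hky ⟨k0.2, hgx⟩
                subst this
                exact hA ⟨↑j, TransGen.tail' hyb ⟨b.2, hgb⟩⟩
        rw [e2, hsum]
        ring
      · have e2 : (if Pp r g i j then (1:ℝ) else 0) = 0 :=
          if_neg (fun h => hre (rtg_relx_le h.2))
        have hz : ∑ k ∈ cfilter (fun k : {x : Fin c // x ≠ r} => g k = ↑j) Finset.univ,
            (if Pp r g i k then (1:ℝ) else 0) = 0 := by
          refine Finset.sum_eq_zero (fun k hk => ?_)
          have hgk : g k = ↑j := (mem_cfilter.1 hk).2
          refine if_neg ?_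
          rintro ⟨-, hp⟩
          exact hre ((rtg_relx_le hp).tail ⟨k.2, hgk⟩)
        rw [e2, hz]
        ring
  · have e1 : (if Acyc r g ∧ i = j then (1:ℝ) else 0) = 0 :=
      if_neg (fun h => hA h.1)
    rw [e1]
    obtain ⟨v0, hv0⟩ := not_not.1 hA
    by_cases hAC : AllCyc r g ↑j
    · have hjv0 : ReflTransGen (grel r g) v0 ↑j := hAC v0 hv0
      have hjj : TransGen (grel r g) ↑j ↑j :=
        TransGen.trans_right (cycle_back (ρ := grel r g) det hjv0 hv0)
          (TransGen.trans_left hv0 hjv0)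
      obtain ⟨x, hjx, hxj⟩ := TransGen.tail'_iff.1 hjj
      obtain ⟨hxr, hgx⟩ := hxj
      set k0 : {x : Fin c // x ≠ r} := ⟨x, hxr⟩ with hk0
      have hACk0 : AllCyc r g ↑k0 := fun v hv => (hAC v hv).trans hjx
      set C : Finset (Fin c) := cfilter (fun v => ReflTransGen (grel r g) ↑j v ∧
        ReflTransGen (grel r g) v ↑j) Finset.univ with hC
      have hCr : ∀ v ∈ C, v ≠ r := by
        intro v hv hvr
        have h2 := (mem_cfilter.1 hv).2.2
        subst hvr
        rcases h2.cases_head with he | ⟨y, hy, -⟩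
        · exact j.2 he.symm
        · exact hy.1 rfl
      have hcycC : ∀ v ∈ C, TransGen (grel r g) v v := by
        intro v hv
        obtain ⟨-, h1, h2⟩ := mem_cfilter.1 hv
        exact TransGen.trans_right h2 (TransGen.trans_left hjj h1)
      have hgC : ∀ (v : Fin c) (hv : v ∈ C), g ⟨v, hCr v hv⟩ ∈ C := by
        intro v hv
        obtain ⟨-, h1, h2⟩ := mem_cfilter.1 hv
        have hstep : grel r g v (g ⟨v, hCr v hv⟩) := ⟨hCr v hv, rfl⟩
        refine mem_cfilter.2 ⟨Finset.mem_univ _, h1.tail hstep, ?_⟩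
        obtain ⟨z, hvz, hzv⟩ := TransGen.head'_iff.1 (hcycC v hv)
        have : z = g ⟨v, hCr v hv⟩ := det hvz hstep
        subst this
        exact hzv.trans h2
      set σ : {v // v ∈ C} → {v // v ∈ C} :=
        fun v => ⟨g ⟨v.1, hCr v.1 v.2⟩, hgC v.1 v.2⟩ with hσ
      have hsurj : Function.Surjective σ := by
        rintro ⟨w, hw⟩
        obtain ⟨-, hw1, hw2⟩ := mem_cfilter.1 hw
        obtain ⟨u, hwu, huw⟩ := TransGen.tail'_iff.1 (hcycC w hw)
        have huC : u ∈ C := mem_cfilter.2 ⟨Finset.mem_univ _, hw1.trans hwu,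
          (ReflTransGen.single huw).trans hw2⟩
        refine ⟨⟨u, huC⟩, ?_⟩
        obtain ⟨hur, hguw⟩ := huw
        exact Subtype.ext hguw
      have hinj : Function.Injective σ := Finite.injective_iff_surjective.2 hsurj
      have hjC : (j : Fin c) ∈ C :=
        mem_cfilter.2 ⟨Finset.mem_univ _, ReflTransGen.refl, ReflTransGen.refl⟩
      have hk0C : (k0 : Fin c) ∈ C := mem_cfilter.2 ⟨Finset.mem_univ _, hjx,
        ReflTransGen.single ⟨k0.2, hgx⟩⟩
      have hsum : ∑ k ∈ cfilter (fun k : {x : Fin c // x ≠ r} => g k = ↑j) Finset.univ,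
          (if Pp r g i k then (1:ℝ) else 0) = (if Pp r g i k0 then (1:ℝ) else 0) := by
        refine Finset.sum_eq_single_of_mem k0 (mem_cfilter.2 ⟨Finset.mem_univ _, hgx⟩) ?_
        intro b hb hbk
        have hgb : g b = ↑j := (mem_cfilter.1 hb).2
        refine if_neg ?_
        rintro ⟨hACb, -⟩
        have hjb : ReflTransGen (grel r g) ↑j ↑b := hACb ↑j hjj
        have hbC : (b : Fin c) ∈ C := mem_cfilter.2 ⟨Finset.mem_univ _, hjb,
          ReflTransGen.single ⟨b.2, hgb⟩⟩
        have h1 : σ ⟨↑b, hbC⟩ = σ ⟨↑k0, hk0C⟩ := by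
          apply Subtype.ext
          show g ⟨↑b, _⟩ = g ⟨↑k0, _⟩
          have e1 : (⟨↑b, hCr ↑b hbC⟩ : {x : Fin c // x ≠ r}) = b := Subtype.ext rfl
          have e2 : (⟨↑k0, hCr ↑k0 hk0C⟩ : {x : Fin c // x ≠ r}) = k0 := Subtype.ext rfl
          rw [e1, e2, hgb, hgx]
        have := hinj h1
        have h2 : (b : Fin c) = ↑k0 := congrArg (Subtype.val : {v // v ∈ C} → Fin c) this
        exact hbk (Subtype.ext h2)
      rw [hsum]
      have hiff : Pp r g i j ↔ Pp r g i k0 := by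
        constructor
        · rintro ⟨-, h2⟩
          exact ⟨hACk0, rtg_relx_of_rtg ((rtg_relx_le h2).trans hjx)⟩
        · rintro ⟨-, h2⟩
          exact ⟨hAC, rtg_relx_of_rtg ((rtg_relx_le h2).tail ⟨k0.2, hgx⟩)⟩
      by_cases hP : Pp r g i j
      · rw [if_pos hP, if_pos (hiff.1 hP)]; ring
      · rw [if_neg hP, if_neg (fun h => hP (hiff.2 h))]; ring
    · have e2 : (if Pp r g i j then (1:ℝ) else 0) = 0 :=
        if_neg (fun h => hAC h.1)
      have hz : ∑ k ∈ cfilter (fun k : {x : Fin c // x ≠ r} => g k = ↑j) Finset.univ,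
          (if Pp r g i k then (1:ℝ) else 0) = 0 := by
        refine Finset.sum_eq_zero (fun k hk => ?_)
        have hgk : g k = ↑j := (mem_cfilter.1 hk).2
        refine if_neg ?_
        rintro ⟨hACk, -⟩
        exact hAC (fun v hv => (hACk v hv).tail ⟨k.2, hgk⟩)
      rw [e2, hz]
      ring

open Classical in
lemma CL {R : Finset (Fin c × Fin c)} (hloop : ∀ v : Fin c, (v, v) ∉ R)
    (κ : Fin c → Fin c → ℝ) (hκ : ValidK R κ) (i j : {x : Fin c // x ≠ r}) :
    ∑ k : {x : Fin c // x ≠ r},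
      Ikappa κ ↑j ↑k * (∑ S ∈ TDUij R (insert (↑k : Fin c) {r}) ↑i ↑k, ∏ a ∈ S, κ a.1 a.2)
    = -(if i = j then ∑ S ∈ TDU R {r}, ∏ a ∈ S, κ a.1 a.2 else 0) := by
  have hsub : R ⊆ Rfull c := by
    intro p hp
    unfold Rfull
    rw [Finset.mem_filter]
    refine ⟨Finset.mem_univ _, fun h => ?_⟩
    have : p = (p.1, p.1) := Prod.ext rfl h.symm
    rw [this] at hp
    exact hloop p.1 hp
  have hz : ∀ p ∉ R, κ p.1 p.2 = 0 := hκ.2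
  have hkjj : κ ↑j ↑j = 0 := hκ.2 ((↑j : Fin c), ↑j) (hloop ↑j)
  set A : {x : Fin c // x ≠ r} → ℝ := fun k =>
    ∑ S ∈ TDUij R (insert (↑k : Fin c) {r}) ↑i ↑k, ∏ a ∈ S, κ a.1 a.2 with hAdef
  set w : ({x : Fin c // x ≠ r} → Fin c) → ℝ := fun g =>
    ∏ v : {x : Fin c // x ≠ r}, κ ↑v (g v) with hwdef
  have hdiag : Ikappa κ ↑j ↑j = -∑ m, κ ↑j m := by
    show (if (↑j : Fin c) = ↑j then -∑ m ∈ Finset.univ.erase (↑j : Fin c), κ ↑j m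
      else κ ↑j ↑j) = -∑ m, κ ↑j m
    rw [if_pos rfl]
    congr 1
    rw [← Finset.add_sum_erase Finset.univ (fun m => κ ↑j m) (Finset.mem_univ (↑j : Fin c)),
      hkjj, zero_add]
  have hoff : ∀ k : {x : Fin c // x ≠ r}, k ≠ j → Ikappa κ ↑j ↑k = κ ↑k ↑j := by
    intro k hk
    show (if (↑j : Fin c) = ↑k then -∑ m ∈ Finset.univ.erase (↑k : Fin c), κ ↑k m
      else κ ↑k ↑j) = κ ↑k ↑j
    rw [if_neg (fun h => hk (Subtype.ext h.symm))]
  have hA_j : (∑ m, κ ↑j m) * A j = ∑ g : {x : Fin c // x ≠ r} → Fin c,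
      (if Pp r g i j then w g else 0) := by
    have h5 := L5 (κ := κ) hsub hz i j (fun _ => (1:ℝ))
    simp only [mul_one] at h5
    rw [mul_comm]
    exact h5.symm
  have hL5k : ∀ k : {x : Fin c // x ≠ r},
      κ ↑k ↑j * A k = ∑ g : {x : Fin c // x ≠ r} → Fin c,
        (if Pp r g i k ∧ g k = ↑j then w g else 0) := by
    intro k
    have h5 := L5 (κ := κ) hsub hz i k (fun m => if m = (↑j : Fin c) then (1:ℝ) else 0)
    have hsum : (∑ m, κ ↑k m * (if m = (↑j : Fin c) then (1:ℝ) else 0)) = κ ↑k ↑j := by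
      rw [Finset.sum_eq_single_of_mem (↑j : Fin c) (Finset.mem_univ _)]
      · rw [if_pos rfl, mul_one]
      · intro b _ hb
        rw [if_neg hb, mul_zero]
    rw [hsum] at h5
    have hright : (∑ g : {x : Fin c // x ≠ r} → Fin c,
        (if Pp r g i k then (∏ v : {x : Fin c // x ≠ r}, κ ↑v (g v)) *
          (if g k = (↑j : Fin c) then (1:ℝ) else 0) else 0))
        = ∑ g : {x : Fin c // x ≠ r} → Fin c,
          (if Pp r g i k ∧ g k = ↑j then w g else 0) := by
      refine Finset.sum_congr rfl (fun g _ => ?_)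
      by_cases hP : Pp r g i k
      · by_cases hgk : g k = (↑j : Fin c)
        · rw [if_pos hP, if_pos hgk, if_pos ⟨hP, hgk⟩, mul_one]
        · rw [if_pos hP, if_neg hgk, if_neg (fun h => hgk h.2), mul_zero]
      · rw [if_neg hP, if_neg (fun h => hP h.1)]
    rw [mul_comm]
    exact h5.symm.trans hright
  have hperg : ∀ g : {x : Fin c // x ≠ r} → Fin c,
      (∑ k ∈ Finset.univ.erase j, if Pp r g i k ∧ g k = ↑j then w g else 0) -
        (if Pp r g i j then w g else 0)
      = -(if Acyc r g ∧ i = j then w g else 0) := by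
    intro g
    by_cases hfix : g j = (↑j : Fin c)
    · have hw0 : w g = 0 := by
        refine Finset.prod_eq_zero (Finset.mem_univ j) ?_
        rw [hfix]
        exact hkjj
      simp [hw0]
    · have hwite : ∀ P : Prop, (if P then w g else 0) = w g * (if P then (1:ℝ) else 0) := by
        intro P
        by_cases h : P
        · rw [if_pos h, if_pos h, mul_one]
        · rw [if_neg h, if_neg h, mul_zero]
      have h1 : (∑ k ∈ Finset.univ.erase j, if Pp r g i k ∧ g k = ↑j then w g else 0)
          = ∑ k ∈ cfilter (fun k : {x : Fin c // x ≠ r} => g k = ↑j) Finset.univ,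
            (if Pp r g i k then w g else 0) := by
        have hhj : (if Pp r g i j ∧ g j = ↑j then w g else 0) = 0 :=
          if_neg (fun h => hfix h.2)
        calc ∑ k ∈ Finset.univ.erase j, (if Pp r g i k ∧ g k = ↑j then w g else 0)
            = ∑ k, (if Pp r g i k ∧ g k = ↑j then w g else 0) := by
              rw [← Finset.add_sum_erase Finset.univ
                (fun k => if Pp r g i k ∧ g k = ↑j then w g else 0) (Finset.mem_univ j),
                hhj, zero_add]
          _ = ∑ k ∈ cfilter (fun k : {x : Fin c // x ≠ r} => g k = ↑j) Finset.univ,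
              (if Pp r g i k then w g else 0) := by
              unfold cfilter
              rw [Finset.sum_filter]
              refine Finset.sum_congr rfl (fun k _ => ?_)
              by_cases hgk : g k = (↑j : Fin c)
              · by_cases hP : Pp r g i k
                · rw [if_pos ⟨hP, hgk⟩, if_pos hgk, if_pos hP]
                · rw [if_neg (fun h => hP h.1), if_pos hgk, if_neg hP]
              · rw [if_neg (fun h => hgk h.2), if_neg hgk]
      rw [h1]
      have hKC := key_claim (r := r) g i j
      have h2 : ∑ k ∈ cfilter (fun k : {x : Fin c // x ≠ r} => g k = ↑j) Finset.univ,
          (if Pp r g i k then w g else 0)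
          = w g * ∑ k ∈ cfilter (fun k : {x : Fin c // x ≠ r} => g k = ↑j) Finset.univ,
          (if Pp r g i k then (1:ℝ) else 0) := by
        rw [Finset.mul_sum]
        exact Finset.sum_congr rfl (fun k _ => hwite _)
      rw [h2]
      simp only [hwite]
      have h3 : (if (Acyc r g ∧ i = j) then w g else 0) =
          w g * (if (Acyc r g ∧ i = j) then (1:ℝ) else 0) := by
        by_cases hQ : Acyc r g ∧ i = j
        · rw [if_pos hQ, if_pos hQ, mul_one]
        · rw [if_neg hQ, if_neg hQ, mul_zero]
      rw [h3]
      linear_combination (-(w g)) * hKC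
  calc ∑ k : {x : Fin c // x ≠ r}, Ikappa κ ↑j ↑k * A k
      = Ikappa κ ↑j ↑j * A j + ∑ k ∈ Finset.univ.erase j, Ikappa κ ↑j ↑k * A k :=
        (Finset.add_sum_erase _ _ (Finset.mem_univ j)).symm
    _ = -((∑ m, κ ↑j m) * A j) + ∑ k ∈ Finset.univ.erase j, κ ↑k ↑j * A k := by
        rw [hdiag, neg_mul]
        congr 1
        refine Finset.sum_congr rfl (fun k hk => ?_)
        rw [hoff k (Finset.mem_erase.1 hk).1]
    _ = -(∑ g : {x : Fin c // x ≠ r} → Fin c, (if Pp r g i j then w g else 0)) +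
        ∑ k ∈ Finset.univ.erase j, ∑ g : {x : Fin c // x ≠ r} → Fin c,
          (if Pp r g i k ∧ g k = ↑j then w g else 0) := by
        rw [hA_j]
        congr 1
        exact Finset.sum_congr rfl (fun k _ => hL5k k)
    _ = -(∑ g : {x : Fin c // x ≠ r} → Fin c, (if Pp r g i j then w g else 0)) +
        ∑ g : {x : Fin c // x ≠ r} → Fin c, ∑ k ∈ Finset.univ.erase j,
          (if Pp r g i k ∧ g k = ↑j then w g else 0) := by
        rw [Finset.sum_comm]
    _ = ∑ g : {x : Fin c // x ≠ r} → Fin c,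
        ((∑ k ∈ Finset.univ.erase j, (if Pp r g i k ∧ g k = ↑j then w g else 0)) -
          (if Pp r g i j then w g else 0)) := by
        rw [Finset.sum_sub_distrib]
        ring
    _ = ∑ g : {x : Fin c // x ≠ r} → Fin c, -(if Acyc r g ∧ i = j then w g else 0) :=
        Finset.sum_congr rfl (fun g _ => hperg g)
    _ = -(if i = j then ∑ S ∈ TDU R {r}, ∏ a ∈ S, κ a.1 a.2 else 0) := by
        rw [Finset.sum_neg_distrib]
        congr 1
        by_cases hij : i = j
        · rw [if_pos hij, L_T κ hsub hz]
          refine Finset.sum_congr rfl (fun g _ => ?_)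
          by_cases hA : Acyc r g
          · rw [if_pos ⟨hA, hij⟩, if_pos hA]
          · rw [if_neg (fun h => hA h.1), if_neg hA]
        · rw [if_neg hij]
          refine Finset.sum_eq_zero (fun g _ => ?_)
          exact if_neg (fun h => hij h.2)

def iterR (R : Finset (Fin c × Fin c)) (r : Fin c) : ℕ → Fin c → Prop
  | 0, v => v = r
  | n+1, v => v = r ∨ ∃ w, (v, w) ∈ R ∧ iterR R r n w

lemma exists_iterR {R : Finset (Fin c × Fin c)} (hreach : ∀ k : Fin c, Reach R k r) :
    ∀ v : Fin c, ∃ n, iterR R r n v := by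
  intro v
  have h := hreach v
  unfold Reach at h
  induction h using ReflTransGen.head_induction_on with
  | refl => exact ⟨0, rfl⟩
  | @head x y h' hyb ih =>
    obtain ⟨n, hn⟩ := ih
    exact ⟨n + 1, Or.inr ⟨y, h', hn⟩⟩

open Classical in
lemma T_pos {R : Finset (Fin c × Fin c)} (hloop : ∀ v : Fin c, (v, v) ∉ R)
    (hreach : ∀ k : Fin c, Reach R k r) (κ : Fin c → Fin c → ℝ) (hκ : ValidK R κ) :
    0 < ∑ S ∈ TDU R {r}, ∏ a ∈ S, κ a.1 a.2 := by
  have hsub : R ⊆ Rfull c := by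
    intro p hp
    unfold Rfull
    rw [Finset.mem_filter]
    refine ⟨Finset.mem_univ _, fun h => ?_⟩
    have : p = (p.1, p.1) := Prod.ext rfl h.symm
    rw [this] at hp
    exact hloop p.1 hp
  rw [L_T κ hsub hκ.2]
  set d : Fin c → ℕ := fun v => Nat.find (exists_iterR hreach v) with hd
  have hspec : ∀ v, iterR R r (d v) v := fun v => Nat.find_spec (exists_iterR hreach v)
  have hstep : ∀ v : {x : Fin c // x ≠ r}, ∃ w, ((v : Fin c), w) ∈ R ∧ d w < d ↑v := by
    intro v
    have h0 := hspec ↑v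
    rcases hdv : d ↑v with _ | m
    · rw [hdv] at h0
      exact absurd h0 v.2
    · rw [hdv] at h0
      rcases h0 with h | ⟨w, hw, hit⟩
      · exact absurd h v.2
      · exact ⟨w, hw, Nat.lt_succ_of_le (Nat.find_min' (exists_iterR hreach w) hit)⟩
  choose g₀ hg₀R hg₀d using hstep
  have hAg₀ : Acyc r g₀ := by
    rintro ⟨v, hv⟩
    have hdec : ∀ x y, grel r g₀ x y → d y < d x := by
      rintro x y ⟨h, rfl⟩
      exact hg₀d ⟨x, h⟩
    exact absurd (tg_decrease d hdec hv) (lt_irrefl _)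
  have hnn : ∀ p : Fin c × Fin c, 0 ≤ κ p.1 p.2 := by
    intro p
    by_cases hp : p ∈ R
    · exact le_of_lt (hκ.1 p hp)
    · exact le_of_eq (hκ.2 p hp).symm
  refine Finset.sum_pos' (fun g _ => ?_) ⟨g₀, Finset.mem_univ _, ?_⟩
  · by_cases hA : Acyc r g
    · rw [if_pos hA]
      exact Finset.prod_nonneg (fun v _ => hnn ((v : Fin c), g v))
    · rw [if_neg hA]
  · rw [if_pos hAg₀]
    exact Finset.prod_pos (fun v _ => hκ.1 ((v : Fin c), g₀ v) (hg₀R v))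

end Ctx

theorem stmt9 {c : ℕ}
    (R : Finset (Fin c × Fin c)) (hloop : ∀ v : Fin c, (v, v) ∉ R)
    -- `{r} = C'` is the vertex set of the unique absorbing strong component (`ℓ = t = 1`):
    (r : Fin c)
    (habs : ∀ p ∈ R, p.1 ≠ r)
    (hreach : ∀ k : Fin c, Reach R k r)
    (hweak : ∀ a b : Fin c,
      Relation.ReflTransGen (fun x y => (x, y) ∈ R ∨ (y, x) ∈ R) a b)
    (hnsc : ¬ ∀ a b : Fin c, Reach R a b)
    (κ : Fin c → Fin c → ℝ) (hκ : ValidK R κ)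
    -- `Ipp` is the submatrix `I''_κ` of `I_κ` with rows and columns indexed by `C''`:
    (Ipp : Matrix {x : Fin c // x ≠ r} {x : Fin c // x ≠ r} ℝ)
    (hIpp : ∀ j i : {x : Fin c // x ≠ r}, Ipp j i = Ikappa κ j.val i.val) :
    0 < (∑ S ∈ TDU R {r}, ∏ a ∈ S, κ a.1 a.2) ∧
    IsUnit Ipp ∧
    ∀ i j : {x : Fin c // x ≠ r},
      Ipp⁻¹ j i =
        -(∑ S ∈ TDUij R (insert (j : Fin c) {r}) i.val j.val, ∏ a ∈ S, κ a.1 a.2) /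
          (∑ S ∈ TDU R {r}, ∏ a ∈ S, κ a.1 a.2) := by
  have hTpos := T_pos (r := r) hloop hreach κ hκ
  set T := ∑ S ∈ TDU R {r}, ∏ a ∈ S, κ a.1 a.2 with hT
  have hT0 : T ≠ 0 := ne_of_gt hTpos
  set N : Matrix {x : Fin c // x ≠ r} {x : Fin c // x ≠ r} ℝ :=
    Matrix.of (fun k i' : {x : Fin c // x ≠ r} =>
      -(∑ S ∈ TDUij R (insert (↑k : Fin c) {r}) ↑i' ↑k, ∏ a ∈ S, κ a.1 a.2) / T) with hN
  have hmul : Ipp * N = 1 := by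
    ext j i'
    rw [Matrix.mul_apply]
    calc ∑ k : {x : Fin c // x ≠ r}, Ipp j k * N k i'
        = ∑ k : {x : Fin c // x ≠ r},
            (Ikappa κ ↑j ↑k *
              (∑ S ∈ TDUij R (insert (↑k : Fin c) {r}) ↑i' ↑k, ∏ a ∈ S, κ a.1 a.2)) *
            (-T⁻¹) := by
          refine Finset.sum_congr rfl (fun k _ => ?_)
          rw [hIpp j k]
          simp only [hN, Matrix.of_apply]
          ring
      _ = (∑ k : {x : Fin c // x ≠ r},
            Ikappa κ ↑j ↑k *
              (∑ S ∈ TDUij R (insert (↑k : Fin c) {r}) ↑i' ↑k, ∏ a ∈ S, κ a.1 a.2)) *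
            (-T⁻¹) := (Finset.sum_mul _ _ _).symm
      _ = -(if i' = j then T else 0) * (-T⁻¹) := by
          rw [CL (r := r) hloop κ hκ i' j]
      _ = (1 : Matrix {x : Fin c // x ≠ r} {x : Fin c // x ≠ r} ℝ) j i' := by
          rw [Matrix.one_apply]
          by_cases h : j = i'
          · rw [if_pos h.symm, if_pos h]
            field_simp
          · rw [if_neg (fun hh => h hh.symm), if_neg h]
            ring
  have hinv : Ipp⁻¹ = N := Matrix.inv_eq_right_inv hmul
  refine ⟨hTpos, ?_, ?_⟩
  · exact (Matrix.isUnit_iff_isUnit_det Ipp).2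
      (IsUnit.of_mul_eq_one (Matrix.det N) (by rw [← Matrix.det_mul, hmul, Matrix.det_one]))
  · intro i' j'
    rw [hinv]
    simp only [hN, Matrix.of_apply]
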